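/- There exists a constant c > 0 such that for all x₃ > 0 and all t > 0, ∫₀ᵗ ∫_{ℝ₊³} (|x−z*|² + (t−τ))^(-2) dz dτ ≤ c · t/x₃, where z* = (z₁, z₂, −z₃) denotes reflection across the boundary plane and x = (0,0,x₃). -/

import Mathlib

open MeasureTheory Real Set

lemma aux_int1 {c : ℝ} (hc : 0 < c) :
    Integrable (fun y : ℝ => (y ^ 2 + c)⁻¹) := by
  have h := (integrable_inv_one_add_sq.const_mul c⁻¹).comp_mul_left'
      (R := (Real.sqrt c)⁻¹) (by positivity)
  convert h using 2 with y
  field_simp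
  simp only [Real.sq_sqrt hc.le]
  ring

lemma aux_val1 {c : ℝ} (hc : 0 < c) :
    ∫ y : ℝ, (y ^ 2 + c)⁻¹ = π / Real.sqrt c := by
  have h := Measure.integral_comp_inv_mul_left
      (fun x : ℝ => c⁻¹ * (1 + x ^ 2)⁻¹) (Real.sqrt c)
  have e : ∀ y : ℝ, c⁻¹ * (1 + ((Real.sqrt c)⁻¹ * y) ^ 2)⁻¹ = (y ^ 2 + c)⁻¹ := by
    intro y
    rw [mul_pow, inv_pow, Real.sq_sqrt hc.le]
    field_simp
    ring
  simp only [e, integral_const_mul, integral_univ_inv_one_add_sq] at h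
  rw [h, abs_of_nonneg (Real.sqrt_nonneg c), smul_eq_mul]
  rw [eq_div_iff (by positivity)]
  rw [mul_comm, ← mul_assoc, mul_comm (Real.sqrt c), mul_assoc, ← Real.sq_sqrt hc.le]
  ring_nf
  rw [Real.sq_sqrt hc.le]
  field_simp

lemma aux_shift_int {b : ℝ} (hb : 0 < b) :
    IntegrableOn (fun x : ℝ => ((b + x) ^ 2)⁻¹) (Ioi 0) := by
  have hemb : MeasurableEmbedding (fun x : ℝ => b + x) :=
    (MeasurableEquiv.addLeft b).measurableEmbedding
  have hpre : (fun x : ℝ => b + x) ⁻¹' (Ioi b) = Ioi 0 := by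
    ext x; simp
  have hmp := (measurePreserving_add_left volume b).restrict_preimage_emb hemb (Ioi b)
  rw [hpre] at hmp
  have hI : IntegrableOn (fun u : ℝ => (u ^ 2)⁻¹) (Ioi b) := by
    have := integrableOn_Ioi_rpow_of_lt (by norm_num : (-2:ℝ) < -1) hb
    apply this.congr_fun ?_ measurableSet_Ioi
    intro u hu
    show u ^ (-2:ℝ) = (u ^ 2)⁻¹
    rw [Real.rpow_neg (le_of_lt (hb.trans hu)), Real.rpow_two]
  have := (hmp.integrable_comp_emb hemb).2 hI
  simpa [Function.comp_def, IntegrableOn] using this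

lemma aux_shift_val {b : ℝ} (hb : 0 < b) :
    ∫ x in Ioi (0:ℝ), ((b + x) ^ 2)⁻¹ = b⁻¹ := by
  have hemb : MeasurableEmbedding (fun x : ℝ => b + x) :=
    (MeasurableEquiv.addLeft b).measurableEmbedding
  have hpre : (fun x : ℝ => b + x) ⁻¹' (Ioi b) = Ioi 0 := by
    ext x; simp
  have h := (measurePreserving_add_left volume b).setIntegral_preimage_emb hemb
      (fun u : ℝ => (u ^ 2)⁻¹) (Ioi b)
  rw [hpre] at h
  rw [h]
  rw [setIntegral_congr_fun measurableSet_Ioi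
    (fun u hu => by rw [← Real.rpow_two, ← Real.rpow_neg (le_of_lt (hb.trans hu))])]
  rw [integral_Ioi_rpow_of_lt (by norm_num : (-2:ℝ) < -1) hb]
  norm_num
  rw [Real.rpow_neg_one]

lemma aux_int2 {c : ℝ} (hc : 0 < c) :
    Integrable (fun p : ℝ × ℝ => (p.1 ^ 2 + c)⁻¹ * (p.2 ^ 2 + c)⁻¹) := by
  rw [Measure.volume_eq_prod]
  exact (aux_int1 hc).mul_prod (aux_int1 hc)

lemma aux_val2 {c : ℝ} (hc : 0 < c) :
    ∫ p : ℝ × ℝ, (p.1 ^ 2 + c)⁻¹ * (p.2 ^ 2 + c)⁻¹ = π ^ 2 / c := by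
  rw [Measure.volume_eq_prod]
  rw [integral_prod_mul (fun y : ℝ => (y ^ 2 + c)⁻¹) (fun y : ℝ => (y ^ 2 + c)⁻¹)]
  rw [aux_val1 hc, div_mul_div_comm, Real.mul_self_sqrt hc.le]
  ring

noncomputable def e3 : EuclideanSpace ℝ (Fin 3) ≃ᵐ ℝ × (ℝ × ℝ) :=
  (MeasurableEquiv.toLp 2 (Fin 3 → ℝ)).symm.trans
    ((MeasurableEquiv.piFinSuccAbove (fun _ : Fin 3 => ℝ) 2).trans
      ((MeasurableEquiv.refl ℝ).prodCongr MeasurableEquiv.finTwoArrow))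

lemma e3_mp : MeasurePreserving (e3.symm) volume volume := by
  have m1 := (EuclideanSpace.volume_preserving_symm_measurableEquiv_toLp (Fin 3))
  have m2 := volume_preserving_piFinSuccAbove (fun _ : Fin 3 => ℝ) 2
  have m3 := (MeasurePreserving.id (volume : Measure ℝ)).prod
      (volume_preserving_finTwoArrow ℝ)
  exact (MeasurePreserving.symm e3 ((m3.comp m2).comp m1))

lemma halfspace_bound {b s : ℝ} (hb : 0 < b) (hs : 0 ≤ s) :
    (∫ z in {z : EuclideanSpace ℝ (Fin 3) | 0 < z 2},
        ((z 0)^2 + (z 1)^2 + (b + z 2)^2 + s) ^ (-(2:ℝ))) ≤ 2 * π ^ 2 / b := by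
  set ρ : Measure (ℝ × ℝ × ℝ) := (volume.restrict (Ioi 0)).prod volume with hρ
  have hpre : e3.symm ⁻¹' {z : EuclideanSpace ℝ (Fin 3) | 0 < z 2}
      = Ioi (0:ℝ) ×ˢ (univ : Set (ℝ × ℝ)) := by
    ext p
    have : (e3.symm p) 2 = p.1 := rfl
    simp [this]
  have h1 : (∫ z in {z : EuclideanSpace ℝ (Fin 3) | 0 < z 2},
        ((z 0)^2 + (z 1)^2 + (b + z 2)^2 + s) ^ (-(2:ℝ)))
      = ∫ p : ℝ × ℝ × ℝ, (p.2.1 ^ 2 + p.2.2 ^ 2 + (b + p.1) ^ 2 + s) ^ (-(2:ℝ)) ∂ρ := by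
    rw [← e3_mp.setIntegral_preimage_emb (MeasurableEquiv.measurableEmbedding _)
        (fun z => ((z 0)^2 + (z 1)^2 + (b + z 2)^2 + s) ^ (-(2:ℝ)))
        {z : EuclideanSpace ℝ (Fin 3) | 0 < z 2}, hpre]
    have h2 : ρ = volume.restrict (Ioi (0:ℝ) ×ˢ (univ : Set (ℝ × ℝ))) := by
      rw [hρ, ← Measure.restrict_univ (μ := (volume : Measure (ℝ × ℝ))),
        Measure.prod_restrict]
      rfl
    rw [h2]
    rfl
  rw [h1]
  -- a.e. positivity of first coordinate
  have hae : ∀ᵐ p ∂ρ, 0 < p.1 := by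
    rw [ae_iff]
    have hset : {p : ℝ × ℝ × ℝ | ¬ 0 < p.1} = Iic 0 ×ˢ (univ : Set (ℝ × ℝ)) := by
      ext p; simp
    rw [hset, hρ, Measure.prod_prod, Measure.restrict_apply measurableSet_Iic]
    have : Iic (0:ℝ) ∩ Ioi 0 = ∅ := by
      ext x; simp
    rw [this]
    simp
  -- integrability of M
  have hMmeas : AEStronglyMeasurable (fun p : ℝ × ℝ × ℝ =>
      (p.2.1 ^ 2 + (b + p.1) ^ 2 / 2)⁻¹ * (p.2.2 ^ 2 + (b + p.1) ^ 2 / 2)⁻¹) ρ := by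
    apply Measurable.aestronglyMeasurable
    fun_prop
  have hMint : Integrable (fun p : ℝ × ℝ × ℝ =>
      (p.2.1 ^ 2 + (b + p.1) ^ 2 / 2)⁻¹ * (p.2.2 ^ 2 + (b + p.1) ^ 2 / 2)⁻¹) ρ := by
    rw [hρ] at hMmeas ⊢
    rw [integrable_prod_iff hMmeas]
    constructor
    · filter_upwards [ae_restrict_mem measurableSet_Ioi] with x hx
      exact aux_int2 (div_pos (pow_pos (by linarith [mem_Ioi.mp hx]) 2) two_pos)
    · apply Integrable.congr ((aux_shift_int hb).const_mul (2 * π ^ 2))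
      filter_upwards [ae_restrict_mem measurableSet_Ioi] with x hx
      have hc : 0 < (b + x) ^ 2 / 2 := div_pos (pow_pos (by linarith [mem_Ioi.mp hx]) 2) two_pos
      have hnn : ∀ y : ℝ × ℝ, 0 ≤ (y.1 ^ 2 + (b + x) ^ 2 / 2)⁻¹ * (y.2 ^ 2 + (b + x) ^ 2 / 2)⁻¹ :=
        fun y => mul_nonneg (inv_nonneg.2 (by positivity)) (inv_nonneg.2 (by positivity))
      symm
      calc (∫ y : ℝ × ℝ, ‖(y.1 ^ 2 + (b + x) ^ 2 / 2)⁻¹ * (y.2 ^ 2 + (b + x) ^ 2 / 2)⁻¹‖)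
          = ∫ y : ℝ × ℝ, (y.1 ^ 2 + (b + x) ^ 2 / 2)⁻¹ * (y.2 ^ 2 + (b + x) ^ 2 / 2)⁻¹ := by
            congr 1; funext y; exact Real.norm_of_nonneg (hnn y)
        _ = π ^ 2 / ((b + x) ^ 2 / 2) := aux_val2 hc
        _ = 2 * π ^ 2 * ((b + x) ^ 2)⁻¹ := by field_simp
  -- G ≤ M a.e.
  have hGM : ∀ᵐ p ∂ρ, (p.2.1 ^ 2 + p.2.2 ^ 2 + (b + p.1) ^ 2 + s) ^ (-(2:ℝ))
      ≤ (p.2.1 ^ 2 + (b + p.1) ^ 2 / 2)⁻¹ * (p.2.2 ^ 2 + (b + p.1) ^ 2 / 2)⁻¹ := by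
    filter_upwards [hae] with p hp
    have hbx : 0 < b + p.1 := by linarith
    have hcpos : 0 < (b + p.1) ^ 2 / 2 := div_pos (pow_pos hbx 2) two_pos
    have hApos : 0 < p.2.1 ^ 2 + p.2.2 ^ 2 + (b + p.1) ^ 2 + s := by positivity
    have h1 : p.2.1 ^ 2 + (b + p.1) ^ 2 / 2
        ≤ p.2.1 ^ 2 + p.2.2 ^ 2 + (b + p.1) ^ 2 + s := by nlinarith [sq_nonneg p.2.2]
    have h2 : p.2.2 ^ 2 + (b + p.1) ^ 2 / 2
        ≤ p.2.1 ^ 2 + p.2.2 ^ 2 + (b + p.1) ^ 2 + s := by nlinarith [sq_nonneg p.2.1]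
    have hprod : (p.2.1 ^ 2 + (b + p.1) ^ 2 / 2) * (p.2.2 ^ 2 + (b + p.1) ^ 2 / 2)
        ≤ (p.2.1 ^ 2 + p.2.2 ^ 2 + (b + p.1) ^ 2 + s) ^ 2 := by
      calc (p.2.1 ^ 2 + (b + p.1) ^ 2 / 2) * (p.2.2 ^ 2 + (b + p.1) ^ 2 / 2)
          ≤ (p.2.1 ^ 2 + p.2.2 ^ 2 + (b + p.1) ^ 2 + s)
            * (p.2.1 ^ 2 + p.2.2 ^ 2 + (b + p.1) ^ 2 + s) :=
            mul_le_mul h1 h2 (by positivity) hApos.le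
        _ = (p.2.1 ^ 2 + p.2.2 ^ 2 + (b + p.1) ^ 2 + s) ^ 2 := (sq _).symm
    rw [Real.rpow_neg hApos.le, Real.rpow_two, ← mul_inv]
    exact inv_anti₀ (by positivity) hprod
  -- integral of M
  have hMval : (∫ p : ℝ × ℝ × ℝ,
      (p.2.1 ^ 2 + (b + p.1) ^ 2 / 2)⁻¹ * (p.2.2 ^ 2 + (b + p.1) ^ 2 / 2)⁻¹ ∂ρ)
      = 2 * π ^ 2 / b := by
    rw [hρ] at hMint ⊢
    rw [integral_prod _ hMint]
    have hval : ∀ x ∈ Ioi (0:ℝ),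
        (∫ y : ℝ × ℝ, (y.1 ^ 2 + (b + x) ^ 2 / 2)⁻¹ * (y.2 ^ 2 + (b + x) ^ 2 / 2)⁻¹)
        = 2 * π ^ 2 * ((b + x) ^ 2)⁻¹ := by
      intro x hx
      have hc : 0 < (b + x) ^ 2 / 2 := div_pos (pow_pos (by linarith [mem_Ioi.mp hx]) 2) two_pos
      calc (∫ y : ℝ × ℝ, (y.1 ^ 2 + (b + x) ^ 2 / 2)⁻¹ * (y.2 ^ 2 + (b + x) ^ 2 / 2)⁻¹)
          = π ^ 2 / ((b + x) ^ 2 / 2) := aux_val2 hc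
        _ = 2 * π ^ 2 * ((b + x) ^ 2)⁻¹ := by field_simp
    rw [setIntegral_congr_fun measurableSet_Ioi hval, integral_const_mul, aux_shift_val hb]
    rw [div_eq_mul_inv]
  calc (∫ p : ℝ × ℝ × ℝ, (p.2.1 ^ 2 + p.2.2 ^ 2 + (b + p.1) ^ 2 + s) ^ (-(2:ℝ)) ∂ρ)
      ≤ ∫ p : ℝ × ℝ × ℝ,
        (p.2.1 ^ 2 + (b + p.1) ^ 2 / 2)⁻¹ * (p.2.2 ^ 2 + (b + p.1) ^ 2 / 2)⁻¹ ∂ρ := by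
        apply integral_mono_of_nonneg ?_ hMint hGM
        exact Filter.Eventually.of_forall fun p => Real.rpow_nonneg (by positivity) _
    _ = 2 * π ^ 2 / b := hMval

/-- There is `c > 0` such that for all `x₃ > 0`, `t > 0`,
`∫₀ᵗ ∫_{ℝ₊³} (|x − z*|² + (t−τ))^(-2) dz dτ ≤ c t / x₃`, where `x = (0,0,x₃)` and
`z* = (z₁, z₂, −z₃)`, so that `|x − z*|² = z₁² + z₂² + (x₃ + z₃)²`. -/
theorem reflected_kernel_integral_bound :
    ∃ c : ℝ, 0 < c ∧ ∀ x₃ t : ℝ, 0 < x₃ → 0 < t →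
      (∫ τ in Ioc (0:ℝ) t, ∫ z in {z : EuclideanSpace ℝ (Fin 3) | 0 < z 2},
          ((z 0)^2 + (z 1)^2 + (x₃ + z 2)^2 + (t - τ)) ^ (-(2:ℝ))) ≤ c * t / x₃ := by
  refine ⟨2 * π ^ 2, by positivity, fun x₃ t hx₃ ht => ?_⟩
  have key : (∫ τ in Ioc (0:ℝ) t, ∫ z in {z : EuclideanSpace ℝ (Fin 3) | 0 < z 2},
        ((z 0)^2 + (z 1)^2 + (x₃ + z 2)^2 + (t - τ)) ^ (-(2:ℝ)))
      ≤ ∫ _τ in Ioc (0:ℝ) t, (2 * π ^ 2 / x₃) := by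
    apply integral_mono_of_nonneg
    · rw [Filter.EventuallyLE, ae_restrict_iff' measurableSet_Ioc]
      refine Filter.Eventually.of_forall fun τ hτ => integral_nonneg fun z =>
        Real.rpow_nonneg (add_nonneg (by positivity) (sub_nonneg.2 hτ.2)) _
    · exact (integrableOn_const_iff).2 (Or.inr (by
        rw [Real.volume_Ioc]; exact ENNReal.ofReal_lt_top))
    · rw [Filter.EventuallyLE, ae_restrict_iff' measurableSet_Ioc]
      exact Filter.Eventually.of_forall fun τ hτ =>
        halfspace_bound hx₃ (sub_nonneg.2 hτ.2)
  have hconst : (∫ _τ in Ioc (0:ℝ) t, (2 * π ^ 2 / x₃)) = 2 * π ^ 2 * t / x₃ := by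
    rw [setIntegral_const, Real.volume_real_Ioc_of_le ht.le, smul_eq_mul]
    ring
  linarith [key, hconst.le]
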